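/- arXiv:1509.08638 — 3 statements merged into one kernel-verified Lean document; each statement's English description precedes it below -/
import Mathlib

section
/- The circular concentration of the IWP_l(λ,δ,ξ) distribution, c = sqrt(α₁² + β₁²), equals exp(-λ(1-cos(2π/l))); it is independent of δ and ξ, equals 1 iff λ = 0 (for l ≥ 2), is strictly decreasing in λ, and tends to 0 as λ → ∞. -/
open Real Filter

/-- Circular concentration of `IWP_l(λ,δ,ξ)` as a function of `λ`. -/
noncomputable def IWPconcentration (l : ℕ) (lam : ℝ) : ℝ :=
  Real.exp (-(lam * (1 - Real.cos (2 * Real.pi / l))))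

lemma IWP_cos_lt_one (l : ℕ) (hl : 2 ≤ l) : Real.cos (2 * Real.pi / l) < 1 := by
  have hl0 : (0:ℝ) < l := by positivity
  have h1 : 0 < 2 * Real.pi / l := by positivity
  have h2 : 2 * Real.pi / l ≤ Real.pi := by
    rw [div_le_iff₀ hl0]
    have : (2:ℝ) ≤ l := by exact_mod_cast hl
    nlinarith [Real.pi_pos]
  calc Real.cos (2 * Real.pi / l) < Real.cos 0 := by
        apply Real.cos_lt_cos_of_nonneg_of_le_pi le_rfl h2 h1
    _ = 1 := Real.cos_zero

/-- The circular concentration `c = sqrt(α₁² + β₁²)` of `IWP_l(λ,δ,ξ)` equals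
`exp(-λ(1-cos(2π/l)))`, independently of `δ` and `ξ`; it equals `1` iff `λ = 0`
(for `l ≥ 2`), is strictly decreasing in `λ` on `[0,∞)`, and tends to `0`
as `λ → ∞`. -/
theorem IWP_concentration (l : ℕ) (hl : 2 ≤ l) (δ ξ : ℝ) (hδ : δ = 1 ∨ δ = -1) :
    (∀ lam : ℝ, 0 ≤ lam →
      Real.sqrt
          ((IWPconcentration l lam *
              Real.cos (δ * ξ + lam * Real.sin (δ * (2 * Real.pi / l)))) ^ 2 +
            (IWPconcentration l lam *
              Real.sin (δ * ξ + lam * Real.sin (δ * (2 * Real.pi / l)))) ^ 2)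
        = IWPconcentration l lam)
    ∧ (∀ lam : ℝ, 0 ≤ lam → (IWPconcentration l lam = 1 ↔ lam = 0))
    ∧ StrictAntiOn (IWPconcentration l) (Set.Ici 0)
    ∧ Tendsto (IWPconcentration l) atTop (nhds 0) := by
  have hc : 0 < 1 - Real.cos (2 * Real.pi / l) := by
    linarith [IWP_cos_lt_one l hl]
  refine ⟨?_, ?_, ?_, ?_⟩
  · intro lam _
    have h := Real.sin_sq_add_cos_sq (δ * ξ + lam * Real.sin (δ * (2 * Real.pi / l)))
    have : (IWPconcentration l lam *
              Real.cos (δ * ξ + lam * Real.sin (δ * (2 * Real.pi / l)))) ^ 2 +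
            (IWPconcentration l lam *
              Real.sin (δ * ξ + lam * Real.sin (δ * (2 * Real.pi / l)))) ^ 2
        = (IWPconcentration l lam) ^ 2 := by
      rw [mul_pow, mul_pow, ← mul_add, add_comm, h, mul_one]
    rw [this]
    exact Real.sqrt_sq (Real.exp_pos _).le
  · intro lam hlam
    unfold IWPconcentration
    rw [Real.exp_eq_one_iff, neg_eq_zero, mul_eq_zero]
    constructor
    · rintro (h | h)
      · exact h
      · linarith
    · intro h; exact Or.inl h
  · intro x _ y _ hxy
    unfold IWPconcentration
    apply Real.exp_lt_exp.mpr
    nlinarith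
  · exact Real.tendsto_exp_atBot.comp
      (tendsto_neg_atTop_atBot.comp (Tendsto.atTop_mul_const hc tendsto_id))
end

section
/- For IWP_l(λ,δ,ξ), the mean direction μ = atan2(β₁, α₁) equals (δξ + λ sin(δ·2π/l)) mod 2π. Consequently, for any fixed concentration (i.e., fixed λ), the mean direction can be set to any value in {2πm/l : 0 ≤ m < l} by varying ξ (with δ = 1 and l | λ sin(2π/l) chosen appropriately), so mean direction and concentration vary independently. -/
open Real Complex

/-- Mean direction of `IWP_l(λ,δ,ξ)`: with first trigonometric moments
`α₁ = c cos(δξ + λ sin(δ2π/l))` and `β₁ = c sin(δξ + λ sin(δ2π/l))`,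
`c = exp(-λ(1-cos(2π/l))) > 0`, the mean direction `μ = atan2(β₁,α₁) mod 2π`
equals `(δξ + λ sin(δ·2π/l)) mod 2π`.  Moreover, for fixed `λ` (hence fixed
concentration) with `δ = 1` and `λ sin(2π/l)` a multiple of `2π/l`, the mean
direction can be set to any value in `{2πm/l : 0 ≤ m < l}` by varying `ξ`;
so mean direction and concentration vary independently. -/
theorem IWP_mean_direction (l : ℕ) (hl : 2 ≤ l) (lam : ℝ) (hlam : 0 ≤ lam)
    (δ : ℝ) (hδ : δ = 1 ∨ δ = -1) (m : ℕ) (hm : m < l)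
    (ξ : ℝ) (hξ : ξ = 2 * Real.pi * m / l) :
    (toIcoMod Real.two_pi_pos 0
        (Complex.arg
          (((Real.exp (-(lam * (1 - Real.cos (2 * Real.pi / l)))) *
              Real.cos (δ * ξ + lam * Real.sin (δ * (2 * Real.pi / l))) : ℝ) : ℂ) +
            ((Real.exp (-(lam * (1 - Real.cos (2 * Real.pi / l)))) *
              Real.sin (δ * ξ + lam * Real.sin (δ * (2 * Real.pi / l))) : ℝ) : ℂ) *
              Complex.I))
      = toIcoMod Real.two_pi_pos 0 (δ * ξ + lam * Real.sin (δ * (2 * Real.pi / l))))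
    ∧
    ((δ = 1 ∧ ∃ k : ℕ, lam * Real.sin (2 * Real.pi / l) = 2 * Real.pi * k / l) →
      ∀ m' : ℕ, m' < l → ∃ m'' : ℕ, m'' < l ∧
        toIcoMod Real.two_pi_pos 0
            (2 * Real.pi * m'' / l + lam * Real.sin (2 * Real.pi / l))
          = 2 * Real.pi * m' / l) := by
  constructor
  · set θ : ℝ := δ * ξ + lam * Real.sin (δ * (2 * Real.pi / l)) with hθ
    set r : ℝ := Real.exp (-(lam * (1 - Real.cos (2 * Real.pi / l)))) with hr
    have hr0 : 0 < r := Real.exp_pos _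
    have harg : ((r * Real.cos θ : ℝ) : ℂ) + ((r * Real.sin θ : ℝ) : ℂ) * Complex.I
        = (r : ℂ) * (Complex.cos θ + Complex.sin θ * Complex.I) := by
      push_cast
      ring
    rw [harg, Complex.arg_mul_cos_add_sin_mul_I_eq_toIocMod hr0]
    exact (toIcoMod_eq_toIcoMod _).2 ⟨toIocDiv Real.two_pi_pos (-π) θ,
      self_sub_toIocMod Real.two_pi_pos (-π) θ⟩
  · rintro ⟨-, k, hk⟩ m' hm'
    have hl0 : (0 : ℝ) < l := by positivity
    refine ⟨(m' + (l - k % l)) % l, Nat.mod_lt _ (by omega), ?_⟩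
    rw [hk, toIcoMod_eq_iff]
    constructor
    · constructor
      · positivity
      · rw [zero_add, div_lt_iff₀ hl0]
        have hml : (m' : ℝ) < l := by exact_mod_cast hm'
        nlinarith [Real.pi_pos]
    · set a : ℕ := (m' + (l - k % l)) % l with ha
      have hk2 : k % l < l := Nat.mod_lt _ (by omega)
      have hcong : (a + k) % l = m' % l := by
        calc (a + k) % l = (a + k % l) % l := (Nat.add_mod_mod _ _ _).symm
          _ = ((m' + (l - k % l)) + k % l) % l := by rw [ha, Nat.mod_add_mod]
          _ = (m' + l) % l := by congr 1; omega
          _ = m' % l := Nat.add_mod_right _ _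
      obtain ⟨z, hz⟩ : ∃ z : ℤ, (a : ℤ) + k = m' + z * l := by
        obtain ⟨t, ht⟩ := (Nat.modEq_iff_dvd (n := l)).mp hcong
        exact ⟨-t, by push_cast at ht ⊢; linarith⟩
      refine ⟨z, ?_⟩
      have hzr : (a : ℝ) + k = m' + z * l := by exact_mod_cast hz
      have hl0' : (l : ℝ) ≠ 0 := ne_of_gt hl0
      rw [zsmul_eq_mul]
      field_simp
      linear_combination hzr
end

section
/- For IWP_l(λ,δ,ξ) with l ≥ 3 and concentration c < 1, the circular skewness s = c·sin(μ₂ - 2μ)/(1-c)^{3/2} equals c·sin(-2λδ sin(2π/l)(1-cos(2π/l)))/(1-c)^{3/2}, where μ and μ₂ are the first and second mean directions. In particular s is independent of ξ. -/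
open Real

/-- Circular skewness of `IWP_l(λ,δ,ξ)`: with concentration
`c = exp(-λ(1-cos(2π/l))) < 1`, first and second mean directions
`μ = (δξ + λ sin(δ·2π/l)) mod 2π` and `μ₂ = (2δξ + λ sin(δ·4π/l)) mod 2π`,
the circular skewness `s = c·sin(μ₂ - 2μ)/(1-c)^(3/2)` equals
`c·sin(-2λδ sin(2π/l)(1-cos(2π/l)))/(1-c)^(3/2)`; in particular `s` does not
depend on `ξ`. -/
theorem IWP_skewness (l : ℕ) (hl : 3 ≤ l) (lam : ℝ) (hlam : 0 ≤ lam)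
    (δ : ℝ) (hδ : δ = 1 ∨ δ = -1) (m : ℕ) (hm : m < l)
    (ξ : ℝ) (hξ : ξ = 2 * Real.pi * m / l)
    (c : ℝ) (hc : c = Real.exp (-(lam * (1 - Real.cos (2 * Real.pi / l)))))
    (hc1 : c < 1) :
    c * Real.sin
        (toIcoMod Real.two_pi_pos 0 (2 * (δ * ξ) + lam * Real.sin (δ * (4 * Real.pi / l)))
          - 2 * toIcoMod Real.two_pi_pos 0
              (δ * ξ + lam * Real.sin (δ * (2 * Real.pi / l)))) /
        (1 - c) ^ ((3:ℝ)/2)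
      = c * Real.sin (-2 * lam * δ * Real.sin (2 * Real.pi / l) *
            (1 - Real.cos (2 * Real.pi / l))) /
          (1 - c) ^ ((3:ℝ)/2) := by
  set a := 2 * (δ * ξ) + lam * Real.sin (δ * (4 * Real.pi / l)) with ha
  set b := δ * ξ + lam * Real.sin (δ * (2 * Real.pi / l)) with hb
  set k1 := toIcoDiv Real.two_pi_pos 0 a
  set k2 := toIcoDiv Real.two_pi_pos 0 b
  have e1 : toIcoMod Real.two_pi_pos 0 a = a - k1 * (2 * Real.pi) := by
    have := self_sub_toIcoMod Real.two_pi_pos 0 a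
    push_cast [zsmul_eq_mul] at this ⊢
    linarith
  have e2 : toIcoMod Real.two_pi_pos 0 b = b - k2 * (2 * Real.pi) := by
    have := self_sub_toIcoMod Real.two_pi_pos 0 b
    push_cast [zsmul_eq_mul] at this ⊢
    linarith
  rw [e1, e2]
  have key : a - 2 * b = -2 * lam * δ * Real.sin (2 * Real.pi / l) *
      (1 - Real.cos (2 * Real.pi / l)) := by
    have hsin4 : Real.sin (δ * (4 * Real.pi / l)) = δ * Real.sin (4 * Real.pi / l) := by
      rcases hδ with h | h <;> simp [h, Real.sin_neg]
    have hsin2 : Real.sin (δ * (2 * Real.pi / l)) = δ * Real.sin (2 * Real.pi / l) := by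
      rcases hδ with h | h <;> simp [h, Real.sin_neg]
    have hdbl : Real.sin (4 * Real.pi / l) = 2 * Real.sin (2 * Real.pi / l) * Real.cos (2 * Real.pi / l) := by
      have : (4 : ℝ) * Real.pi / l = 2 * (2 * Real.pi / l) := by ring
      rw [this, Real.sin_two_mul]
    rw [ha, hb, hsin4, hsin2, hdbl]; ring
  have : a - k1 * (2 * Real.pi) - 2 * (b - k2 * (2 * Real.pi))
      = (a - 2 * b) + (2 * k2 - k1 : ℤ) * (2 * Real.pi) := by
    push_cast; ring
  rw [this, Real.sin_add_int_mul_two_pi, key]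
end
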